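/- Let t be a term over {d, e, +, ·} in which the constant e does not occur. Then dct(nf(t)) ≥ dct(t), where dct is the d-count (number of occurrences of d) and nf(t) is the unique normal form of t under the rewrite system R. -/
import Mathlib


/-- Ground terms over constants d, e with binary operations + (add) and · (app). -/
inductive Tm : Type
  | d : Tm
  | e : Tm
  | add : Tm → Tm → Tm
  | app : Tm → Tm → Tm
  deriving DecidableEq

open Tm

/-- Root rewrite steps: instances of the oriented rules. -/
inductive Root : Tm → Tm → Prop
  | addE (x) : Root (add x e) x
  | eAdd (x) : Root (add e x) x
  | assoc (x y z) : Root (add (add x y) z) (add x (add y z))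
  | appAdd (x y z) : Root (app (add x y) z) (app y (app x z))
  | appD (x y) : Root (app (app d x) y) (app x (add y x))
  | appE (x) : Root (app e x) x
  | dE : Root (app d e) e

/-- One rewrite step: a root step applied at some subterm position. -/
inductive Step : Tm → Tm → Prop
  | root {t u} : Root t u → Step t u
  | addL {t t' u} : Step t t' → Step (add t u) (add t' u)
  | addR {t u u'} : Step u u' → Step (add t u) (add t u')
  | appL {t t' u} : Step t t' → Step (app t u) (app t' u)
  | appR {t u u'} : Step u u' → Step (app t u) (app t u')

/-- Zero or more rewrite steps. -/
def Steps : Tm → Tm → Prop := Relation.ReflTransGen Step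

/-- A normal form is a term to which no rule applies. -/
def NormalForm (t : Tm) : Prop := ∀ u, ¬ Step t u

/-- Provable equality in the equational theory (reflexive symmetric transitive
congruence closure of the rule instances). -/
def TermEq : Tm → Tm → Prop := Relation.EqvGen Step

/-- The (reflexive) subterm relation. -/
inductive Subterm : Tm → Tm → Prop
  | refl (t) : Subterm t t
  | addL {s t u} : Subterm s t → Subterm s (add t u)
  | addR {s t u} : Subterm s u → Subterm s (add t u)
  | appL {s t u} : Subterm s t → Subterm s (app t u)
  | appR {s t u} : Subterm s u → Subterm s (app t u)

/-- The d-count: number of occurrences of d. -/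
def dct : Tm → ℕ
  | .d => 1
  | .e => 0
  | .add a b => dct a + dct b
  | .app a b => dct a + dct b

lemma efree_dct : ∀ t : Tm, ¬ Subterm e t → 1 ≤ dct t := by
  intro t
  induction t with
  | d => intro _; simp [dct]
  | e => intro h; exact absurd (Subterm.refl e) h
  | add a b iha ihb =>
      intro h
      have : 1 ≤ dct a := iha (fun hs => h (Subterm.addL hs))
      simp [dct]; omega
  | app a b iha ihb =>
      intro h
      have : 1 ≤ dct a := iha (fun hs => h (Subterm.appL hs))
      simp [dct]; omega

lemma root_sub {t u : Tm} (h : Root t u) (hs : Subterm e u) : Subterm e t := by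
  cases h with
  | addE x => exact Subterm.addL hs
  | eAdd x => exact Subterm.addR hs
  | assoc x y z =>
      rcases hs with _ | hs | hs
      · exact Subterm.addL (Subterm.addL hs)
      · rcases hs with _ | hs | hs
        · exact Subterm.addL (Subterm.addR hs)
        · exact Subterm.addR hs
  | appAdd x y z =>
      rcases hs with _ | _ | _ | hs | hs
      · exact Subterm.appL (Subterm.addR hs)
      · rcases hs with _ | _ | _ | hs | hs
        · exact Subterm.appL (Subterm.addL hs)
        · exact Subterm.appR hs
  | appD x y =>
      rcases hs with _ | _ | _ | hs | hs
      · exact Subterm.appL (Subterm.appR hs)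
      · rcases hs with _ | hs | hs
        · exact Subterm.appR hs
        · exact Subterm.appL (Subterm.appR hs)
  | appE x => exact Subterm.appR hs
  | dE => exact Subterm.appR hs

lemma step_sub {t u : Tm} (h : Step t u) (hs : Subterm e u) : Subterm e t := by
  induction h with
  | root hr => exact root_sub hr hs
  | addL _ ih =>
      rcases hs with _ | hs | hs
      · exact Subterm.addL (ih hs)
      · exact Subterm.addR hs
  | addR _ ih =>
      rcases hs with _ | hs | hs
      · exact Subterm.addL hs
      · exact Subterm.addR (ih hs)
  | appL _ ih =>
      rcases hs with _ | _ | _ | hs | hs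
      · exact Subterm.appL (ih hs)
      · exact Subterm.appR hs
  | appR _ ih =>
      rcases hs with _ | _ | _ | hs | hs
      · exact Subterm.appL hs
      · exact Subterm.appR (ih hs)

lemma root_dct {t u : Tm} (h : Root t u) (he : ¬ Subterm e t) : dct t ≤ dct u := by
  cases h with
  | addE x => simp [dct]
  | eAdd x => simp [dct]
  | assoc x y z => simp [dct]; omega
  | appAdd x y z => simp [dct]; omega
  | appD x y =>
      have hx : 1 ≤ dct x :=
        efree_dct x (fun hs => he (Subterm.appL (Subterm.appR hs)))
      simp [dct]; omega
  | appE x => exact absurd (Subterm.appL (Subterm.refl e)) he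
  | dE => exact absurd (Subterm.appR (Subterm.refl e)) he

lemma step_dct {t u : Tm} (h : Step t u) (he : ¬ Subterm e t) : dct t ≤ dct u := by
  induction h with
  | root hr => exact root_dct hr he
  | addL _ ih =>
      have := ih (fun hs => he (Subterm.addL hs))
      simp [dct]; omega
  | addR _ ih =>
      have := ih (fun hs => he (Subterm.addR hs))
      simp [dct]; omega
  | appL _ ih =>
      have := ih (fun hs => he (Subterm.appL hs))
      simp [dct]; omega
  | appR _ ih =>
      have := ih (fun hs => he (Subterm.appR hs))
      simp [dct]; omega

/-- if e does not occur in t, then the d-count of the normal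
form of t is at least the d-count of t. -/
theorem dct_nf_ge :
    ∀ t n : Tm, ¬ Subterm e t → Steps t n → NormalForm n → dct t ≤ dct n := by
  intro t n he hsteps hn
  clear hn
  induction hsteps with
  | refl => exact le_refl _
  | @tail b c hab hbc ih =>
      have hb : ¬ Subterm e b := by
        clear hbc ih
        induction hab with
        | refl => exact he
        | tail _ h ih => exact fun hs => ih (step_sub h hs)
      exact le_trans ih (step_dct hbc hb)
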